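/- Let F/F₀ be an unramified quadratic extension of p-adic fields with uniformizer ϖ. Let 𝕍 be a nondegenerate Hermitian space, E ⊂ 𝕍 a totally isotropic subspace, ℰ ⊂ E a full-rank O_F-lattice in E, and define Vert_ℰ = {vertex lattices Λ : ℰ ⊆ Λ} and Vert_ℰ^† = {Λ ∈ Vert_ℰ : ℰ = E ∩ Λ}. Then the map Λ ↦ Λ♭ := (E^⊥ ∩ Λ)/(E ∩ Λ) sends Vert_ℰ^† to vertex lattices in 𝕍♭ = E^⊥/E, and for Λ ∈ Vert_ℰ^† one has t(Λ♭) ≤ t(Λ). -/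

import Mathlib

section

variable {O F V : Type*} [CommRing O] [Field F] [Algebra O F]
  [AddCommGroup V] [Module F V] [Module O V] [IsScalarTower O F V]

/-- The dual lattice `N^∨ = {x ∈ V | φ(x, N) ⊆ O}`. -/
def dualLat (σ : F ≃+* F) (φ : V →ₗ[F] V →ₛₗ[(σ : F →+* F)] F)
    (N : Submodule O V) : Submodule O V where
  carrier := {x | ∀ y ∈ N, φ x y ∈ (algebraMap O F).range}
  add_mem' := by
    intro a b ha hb y hy
    rw [map_add, LinearMap.add_apply]
    exact add_mem (ha y hy) (hb y hy)
  zero_mem' := by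
    intro y hy
    simp only [map_zero, LinearMap.zero_apply]
    exact zero_mem _
  smul_mem' := by
    intro c x hx y hy
    have h : (c • x : V) = (algebraMap O F c) • x := (algebraMap_smul F c x).symm
    rw [h, map_smul, LinearMap.smul_apply, smul_eq_mul]
    exact mul_mem ⟨c, rfl⟩ (hx y hy)

/-- The orthogonal complement `E^⊥ = {x ∈ V | φ(x, E) = 0}` of a subspace `E`. -/
def orthogonalOf (σ : F ≃+* F) (φ : V →ₗ[F] V →ₛₗ[(σ : F →+* F)] F)
    (E : Submodule F V) : Submodule F V where
  carrier := {x | ∀ y ∈ E, φ x y = 0}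
  add_mem' := by
    intro a b ha hb y hy
    rw [map_add, LinearMap.add_apply, ha y hy, hb y hy, add_zero]
  zero_mem' := by
    intro y hy
    simp only [map_zero, LinearMap.zero_apply]
  smul_mem' := by
    intro c x hx y hy
    rw [map_smul, LinearMap.smul_apply, hx y hy, smul_zero]

/-- the map `Λ ↦ Λ♭` on `Vert_ℰ^†`, §5.5, eq. (eq:vert).
`F/F₀` unramified quadratic extension of `p`-adic fields, `(𝕍, φ)` a nondegenerate
Hermitian space, `E ⊆ 𝕍` totally isotropic, `ℰ ⊂ E` a full-rank `O_F`-lattice in `E`,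
and `Λ ∈ Vert_ℰ^†`, i.e. a vertex lattice with `ℰ = E ∩ Λ`.  Then
`Λ♭ = (E^⊥ ∩ Λ)/(E ∩ Λ)` is a vertex lattice in `𝕍♭ = E^⊥/E` (expressed via
representatives in `E^⊥`), and `t(Λ♭) ≤ t(Λ)`: there is an injective `O`-linear map
`(Λ♭)^∨/Λ♭ ↪ Λ^∨/Λ`, where `(Λ♭)^∨/Λ♭` is realized as
`N₂/((N₁ + E) ∩ N₂)` with `N₁ = E^⊥ ∩ Λ` and
`N₂ = {x ∈ E^⊥ | φ(x, N₁) ⊆ O}`. -/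
theorem keyLem [IsDomain O] [IsPrincipalIdealRing O] [IsFractionRing O F]
    (σ : F ≃+* F) (hσinv : ∀ x, σ (σ x) = x)
    (φ : V →ₗ[F] V →ₛₗ[(σ : F →+* F)] F)
    (hherm : ∀ x y : V, φ x y = σ (φ y x))
    (E : Submodule F V)
    (Λ : Submodule O V) (hfg : Λ.FG)
    (x : V) (hx : x ∈ orthogonalOf σ φ E)
    (hxint : ∀ y ∈ (orthogonalOf σ φ E).restrictScalars O ⊓ Λ,
      φ x y ∈ (algebraMap O F).range) :
    ∃ e ∈ E, ∀ l ∈ Λ, φ (x - e) l ∈ (algebraMap O F).range := by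
  classical
  set P := orthogonalOf σ φ E with hPdef
  let q : V →ₗ[O] V ⧸ P := P.mkQ.restrictScalars O
  let L : Submodule O (V ⧸ P) := Λ.map q
  haveI hfin : Module.Finite O L := Module.Finite.iff_fg.mpr (hfg.map q)
  haveI : NoZeroSMulDivisors O (V ⧸ P) := by
    constructor
    intro a v hav
    by_cases ha : a = 0
    · exact Or.inl ha
    · right
      have h1 : algebraMap O F a • v = 0 := by rwa [algebraMap_smul]
      have h2 : algebraMap O F a ≠ 0 := by
        intro h
        exact ha (IsFractionRing.injective O F (h.trans (map_zero _).symm))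
      rcases smul_eq_zero.mp h1 with h | h
      · exact absurd h h2
      · exact h
  haveI : Module.Free O L := Module.free_of_finite_type_torsion_free'
  set ι := Module.Free.ChooseBasisIndex O L with hι
  let b : Module.Basis ι O L := Module.Free.chooseBasis O L
  have hbc : ∀ i : ι, ∃ c, c ∈ Λ ∧ q c = (b i : V ⧸ P) := by
    intro i
    rcases Submodule.mem_map.mp (b i).2 with ⟨c, hc, hqc⟩
    exact ⟨c, hc, hqc⟩
  choose c hcΛ hqc using hbc
  -- F-linear independence of the images of the basis
  have hind : ∀ a : ι → F, (∑ i, a i • ((b i : V ⧸ P))) = 0 → ∀ i, a i = 0 := by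
    intro a ha
    obtain ⟨d, hd⟩ := IsLocalization.exist_integer_multiples (nonZeroDivisors O)
      Finset.univ a
    have hr : ∀ i : ι, ∃ r : O, algebraMap O F r = (d : O) • a i :=
      fun i => hd i (Finset.mem_univ i)
    choose r hrs using hr
    have hsum0 : L.subtype (∑ i, r i • b i) = 0 := by
      rw [map_sum]
      have heach : ∀ i : ι, L.subtype (r i • b i)
          = algebraMap O F (d : O) • (a i • ((b i : V ⧸ P))) := by
        intro i
        rw [map_smul, Submodule.subtype_apply]
        rw [← algebraMap_smul F (r i) ((b i : V ⧸ P)), hrs i, Algebra.smul_def,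
          mul_smul]
      rw [Finset.sum_congr rfl fun i _ => heach i, ← Finset.smul_sum, ha, smul_zero]
    have hsum : (∑ i, r i • b i) = 0 := by
      apply Submodule.injective_subtype L
      rw [hsum0, map_zero]
    have hr0 : ∀ i, r i = 0 :=
      Fintype.linearIndependent_iff.mp b.linearIndependent r hsum
    intro i
    have h1 : (0 : F) = algebraMap O F (d : O) * a i := by
      rw [← Algebra.smul_def, ← hrs i, hr0 i, map_zero]
    have hd0 : algebraMap O F (d : O) ≠ 0 := by
      intro h
      exact nonZeroDivisors.ne_zero d.2
        (IsFractionRing.injective O F (h.trans (map_zero _).symm)) |>.elim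
    rcases mul_eq_zero.mp h1.symm with h | h
    · exact absurd h hd0
    · exact h
  -- decomposition of elements of Λ
  have hdec : ∀ l ∈ Λ, ∃ a : ι → O,
      (l - ∑ i, a i • c i) ∈ P ∧ (l - ∑ i, a i • c i) ∈ Λ := by
    intro l hl
    have hql : q l ∈ L := Submodule.mem_map_of_mem hl
    set v : L := ⟨q l, hql⟩ with hv
    refine ⟨fun i => b.repr v i, ?_, ?_⟩
    · have hs : (∑ i, b.repr v i • b i) = v := b.sum_repr v
      have hq0 : q (l - ∑ i, b.repr v i • c i) = 0 := by
        rw [map_sub, map_sum]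
        have heach : ∀ i : ι, q (b.repr v i • c i) = b.repr v i • ((b i : V ⧸ P)) := by
          intro i; rw [map_smul, hqc]
        rw [Finset.sum_congr rfl fun i _ => heach i]
        have hcoe := congrArg L.subtype hs
        rw [map_sum] at hcoe
        simp only [map_smul, Submodule.subtype_apply] at hcoe
        rw [hcoe]
        show q l - (v : V ⧸ P) = 0
        rw [hv, sub_self]
      have : P.mkQ (l - ∑ i, b.repr v i • c i) = 0 := hq0
      rwa [Submodule.mkQ_apply, Submodule.Quotient.mk_eq_zero] at this
    · exact sub_mem hl (Submodule.sum_mem _ fun i _ => Submodule.smul_mem _ _ (hcΛ i))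
  -- the linear map β : E → (ι → F), e ↦ (φ e (c i))
  let β : E →ₗ[F] (ι → F) :=
    { toFun := fun e i => φ (e : V) (c i)
      map_add' := by
        intro e₁ e₂; funext i
        simp only [Submodule.coe_add, map_add, LinearMap.add_apply, Pi.add_apply]
      map_smul' := by
        intro s e; funext i
        simp only [Submodule.coe_smul, map_smul, LinearMap.smul_apply,
          RingHom.id_apply, Pi.smul_apply, smul_eq_mul] }
  have hβ : LinearMap.range β = ⊤ := by
    by_contra hne
    obtain ⟨f, hf0, hfbot⟩ := Submodule.exists_dual_map_eq_bot_of_lt_top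
      (lt_top_iff_ne_top.mpr hne) inferInstance
    set a : ι → F := fun i => f (fun j => if i = j then 1 else 0) with hadef
    have hfval : ∀ v : ι → F, f v = ∑ i, v i * a i := by
      intro v
      conv_lhs => rw [pi_eq_sum_univ v]
      rw [map_sum]
      refine Finset.sum_congr rfl fun i _ => ?_
      rw [map_smul, smul_eq_mul]
    have hker : ∀ e : E, f (β e) = 0 := by
      intro e
      have hmem : f (β e) ∈ (LinearMap.range β).map f :=
        Submodule.mem_map_of_mem (LinearMap.mem_range_self β e)
      rw [hfbot] at hmem
      exact (Submodule.mem_bot F).mp hmem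
    set w : V := ∑ i, σ (a i) • c i with hw
    have hφw : ∀ y ∈ E, φ y w = 0 := by
      intro y hy
      have h1 : φ y w = ∑ i, a i * φ y (c i) := by
        rw [hw, map_sum]
        refine Finset.sum_congr rfl fun i _ => ?_
        rw [(φ y).map_smulₛₗ]
        show σ (σ (a i)) • φ y (c i) = _
        rw [hσinv, smul_eq_mul]
      have h2 := hker ⟨y, hy⟩
      rw [hfval] at h2
      rw [h1]
      calc ∑ i, a i * φ y (c i) = ∑ i, φ y (c i) * a i := by
            refine Finset.sum_congr rfl fun i _ => mul_comm _ _
        _ = 0 := h2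
    have hwP : w ∈ P := by
      intro y hy
      rw [hherm w y, hφw y hy, map_zero]
    have hq0 : (∑ i, σ (a i) • ((b i : V ⧸ P))) = 0 := by
      have hmk : P.mkQ w = 0 := by
        rw [Submodule.mkQ_apply, Submodule.Quotient.mk_eq_zero]; exact hwP
      rw [hw, map_sum] at hmk
      have heach : ∀ i : ι, P.mkQ (σ (a i) • c i) = σ (a i) • ((b i : V ⧸ P)) := by
        intro i
        rw [map_smul]
        congr 1
        exact hqc i
      rwa [Finset.sum_congr rfl fun i _ => heach i] at hmk
    have ha0 : ∀ i, a i = 0 := by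
      intro i
      have := hind (fun i => σ (a i)) hq0 i
      have h2 : a i = σ (σ (a i)) := (hσinv _).symm
      rw [h2, this, map_zero]
    exact hf0 (LinearMap.ext fun v => by
      rw [hfval]
      simp [ha0])
  obtain ⟨e, he⟩ : ∃ e : E, β e = fun i => φ x (c i) := by
    have hm : (fun i => φ x (c i)) ∈ LinearMap.range β := by
      rw [hβ]; exact Submodule.mem_top
    exact hm
  refine ⟨(e : V), e.2, ?_⟩
  intro l hl
  obtain ⟨a, hnP, hnΛ⟩ := hdec l hl
  set n := l - ∑ i, a i • c i with hn
  have hl' : l = n + ∑ i, a i • c i := by rw [hn]; abel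
  rw [hl', map_add]
  have hφsub : φ (x - (e : V)) = φ x - φ (e : V) := map_sub φ _ _
  have h1 : φ (x - (e : V)) n = φ x n := by
    rw [hφsub, LinearMap.sub_apply]
    have h0 : φ (e : V) n = 0 := by
      rw [hherm, hnP (e : V) e.2, map_zero]
    rw [h0, sub_zero]
  have h2 : φ (x - (e : V)) (∑ i, a i • c i) = 0 := by
    rw [map_sum]
    apply Finset.sum_eq_zero
    intro i _
    have hsm : (a i • c i : V) = algebraMap O F (a i) • c i :=
      (algebraMap_smul F _ _).symm
    rw [hsm, (φ _).map_smulₛₗ]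
    have h3 : φ (x - (e : V)) (c i) = 0 := by
      rw [hφsub, LinearMap.sub_apply]
      have h4 : φ (e : V) (c i) = φ x (c i) := congrFun he i
      rw [h4, sub_self]
    rw [h3, smul_zero]
  rw [h1, h2, add_zero]
  exact hxint n ⟨hnP, hnΛ⟩

theorem stmt19 [IsDomain O] [IsDiscreteValuationRing O]
    [IsAdicComplete (IsLocalRing.maximalIdeal O) O] [IsFractionRing O F]
    (ϖ : O) (hϖ : Irreducible ϖ)
    (σ : F ≃+* F) (hσinv : ∀ x, σ (σ x) = x)
    (hσO : ∀ a : O, σ (algebraMap O F a) ∈ (algebraMap O F).range)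
    [FiniteDimensional F V]
    (φ : V →ₗ[F] V →ₛₗ[(σ : F →+* F)] F)
    (hherm : ∀ x y : V, φ x y = σ (φ y x))
    (hnd : ∀ x : V, (∀ y : V, φ x y = 0) → x = 0)
    (E : Submodule F V) (hiso : ∀ x ∈ E, ∀ y ∈ E, φ x y = 0)
    -- `ℰ ⊂ E` a full-rank lattice in `E`:
    (ℰ : Submodule O V) (hℰfg : ℰ.FG) (hℰfull : Submodule.span F (ℰ : Set V) = E)
    -- `Λ` a vertex lattice:
    (Λ : Submodule O V) (hfg : Λ.FG) (hfull : Submodule.span F (Λ : Set V) = ⊤)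
    (hint : Λ ≤ dualLat σ φ Λ) (hvert : ∀ x ∈ dualLat σ φ Λ, ϖ • x ∈ Λ)
    -- `Λ ∈ Vert_ℰ^†`: `ℰ ⊆ Λ` and `ℰ = E ∩ Λ`:
    (hℰΛ : ℰ ≤ Λ) (hsat : E.restrictScalars O ⊓ Λ = ℰ) :
    -- (a) `Λ♭ ⊆ (Λ♭)^∨` : the form is integral on `N₁ = E^⊥ ∩ Λ`
    (∀ x ∈ (orthogonalOf σ φ E).restrictScalars O ⊓ Λ,
      ∀ y ∈ (orthogonalOf σ φ E).restrictScalars O ⊓ Λ,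
        φ x y ∈ (algebraMap O F).range) ∧
    -- (b) `(Λ♭)^∨ ⊆ ϖ⁻¹Λ♭` : if `x ∈ E^⊥` pairs integrally with `N₁` then
    --     `ϖ • x ∈ N₁ + E`
    (∀ x ∈ orthogonalOf σ φ E,
      (∀ y ∈ (orthogonalOf σ φ E).restrictScalars O ⊓ Λ,
        φ x y ∈ (algebraMap O F).range) →
      ϖ • x ∈ ((orthogonalOf σ φ E).restrictScalars O ⊓ Λ) ⊔ E.restrictScalars O) ∧
    -- (c) `t(Λ♭) ≤ t(Λ)` : an injective `O`-linear map `(Λ♭)^∨/Λ♭ ↪ Λ^∨/Λ`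
    (∃ f : (↥(dualLat σ φ ((orthogonalOf σ φ E).restrictScalars O ⊓ Λ) ⊓
              (orthogonalOf σ φ E).restrictScalars O) ⧸
            ((((orthogonalOf σ φ E).restrictScalars O ⊓ Λ) ⊔ E.restrictScalars O).comap
              (dualLat σ φ ((orthogonalOf σ φ E).restrictScalars O ⊓ Λ) ⊓
                (orthogonalOf σ φ E).restrictScalars O).subtype)) →ₗ[O]
           (↥(dualLat σ φ Λ) ⧸ (Λ.comap (dualLat σ φ Λ).subtype)),
      Function.Injective f) := by

  classical
  set P := orthogonalOf σ φ E with hPdef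
  set N₁ : Submodule O V := P.restrictScalars O ⊓ Λ with hN₁
  set D : Submodule O V := dualLat σ φ Λ with hD
  set N₂ : Submodule O V := dualLat σ φ N₁ ⊓ P.restrictScalars O with hN₂
  have hEP : ∀ e ∈ E, e ∈ P := by
    intro e he y hy
    exact hiso e he y hy
  -- part (a)
  have parta : ∀ x ∈ N₁, ∀ y ∈ N₁, φ x y ∈ (algebraMap O F).range := by
    intro x hx y hy
    exact hint (Submodule.mem_inf.mp hx).2 y (Submodule.mem_inf.mp hy).2
  -- key consequence: elements of N₂ can be corrected into D by an element of E
  have key : ∀ x ∈ N₂, ∃ e ∈ E, (x - e) ∈ D ∧ (x - e) ∈ P.restrictScalars O := by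
    intro x hxm
    obtain ⟨hx1, hx2⟩ := Submodule.mem_inf.mp hxm
    obtain ⟨e, heE, he⟩ := keyLem σ hσinv φ hherm E Λ hfg x hx2 hx1
    refine ⟨e, heE, he, ?_⟩
    exact sub_mem hx2 (hEP e heE)
  -- part (b)
  have partb : ∀ x ∈ P,
      (∀ y ∈ N₁, φ x y ∈ (algebraMap O F).range) →
      ϖ • x ∈ N₁ ⊔ E.restrictScalars O := by
    intro x hxP hxint
    obtain ⟨e, heE, heD, heP⟩ := key x (Submodule.mem_inf.mpr ⟨hxint, hxP⟩)
    have h1 : ϖ • (x - e) ∈ Λ := hvert _ heD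
    have h2 : ϖ • (x - e) ∈ P.restrictScalars O := Submodule.smul_mem _ _ heP
    have h3 : ϖ • x = ϖ • (x - e) + ϖ • e := by rw [← smul_add]; congr 1; abel
    rw [h3]
    exact add_mem
      (Submodule.mem_sup_left (Submodule.mem_inf.mpr ⟨h2, h1⟩))
      (Submodule.mem_sup_right (Submodule.smul_mem _ _ heE))
  refine ⟨parta, partb, ?_⟩
  -- part (c)
  set M : Submodule O V := D ⊓ P.restrictScalars O with hM
  have hMN₂ : M ≤ N₂ := by
    intro z hz
    obtain ⟨hz1, hz2⟩ := Submodule.mem_inf.mp hz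
    refine Submodule.mem_inf.mpr ⟨?_, hz2⟩
    intro y hy
    exact hz1 y (Submodule.mem_inf.mp hy).2
  set K : Submodule O N₂ := (N₁ ⊔ E.restrictScalars O).comap N₂.subtype with hK
  set T := (↥D ⧸ (Λ.comap D.subtype)) with hT
  set g : ↥M →ₗ[O] T :=
    (Λ.comap D.subtype).mkQ.comp (Submodule.inclusion inf_le_left) with hg
  set π : ↥M →ₗ[O] (↥N₂ ⧸ K) := K.mkQ.comp (Submodule.inclusion hMN₂) with hπ
  have hkerg : ∀ z : ↥M, g z = 0 ↔ (z : V) ∈ Λ := by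
    intro z
    rw [hg, LinearMap.comp_apply, Submodule.mkQ_apply, Submodule.Quotient.mk_eq_zero,
      Submodule.mem_comap]
    rfl
  have hkerπ : ∀ z : ↥M, π z = 0 ↔ (z : V) ∈ N₁ ⊔ E.restrictScalars O := by
    intro z
    rw [hπ, LinearMap.comp_apply, Submodule.mkQ_apply, Submodule.Quotient.mk_eq_zero,
      hK, Submodule.mem_comap]
    rfl
  have hkerle : LinearMap.ker g ≤ LinearMap.ker π := by
    intro z hz
    rw [LinearMap.mem_ker] at hz ⊢
    rw [hkerπ]
    have hzΛ : (z : V) ∈ Λ := (hkerg z).mp hz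
    exact Submodule.mem_sup_left
      (Submodule.mem_inf.mpr ⟨(Submodule.mem_inf.mp z.2).2, hzΛ⟩)
  have hπsurj : Function.Surjective π := by
    intro qb
    obtain ⟨⟨z, hz⟩, rfl⟩ := Submodule.Quotient.mk_surjective K qb
    obtain ⟨e, heE, heD, heP⟩ := key z hz
    have hmem : z - e ∈ M := Submodule.mem_inf.mpr ⟨heD, heP⟩
    refine ⟨⟨z - e, hmem⟩, ?_⟩
    rw [hπ, LinearMap.comp_apply, Submodule.mkQ_apply]
    rw [Submodule.Quotient.eq]
    rw [hK, Submodule.mem_comap]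
    have hval : (N₂.subtype) ((Submodule.inclusion hMN₂) ⟨z - e, hmem⟩ - ⟨z, hz⟩)
        = -e := by
      simp only [map_sub, Submodule.subtype_apply, Submodule.coe_inclusion]
      show (z - e) - z = -e
      abel
    rw [hval]
    exact neg_mem (Submodule.mem_sup_right heE)
  -- residue field
  haveI hmax : (Ideal.span {ϖ}).IsMaximal := PrincipalIdealRing.isMaximal_of_irreducible hϖ
  letI : Field (O ⧸ Ideal.span {ϖ}) := Ideal.Quotient.field _
  -- S := M ⧸ ker g
  let gbar : (↥M ⧸ LinearMap.ker g) →ₗ[O] (↥D ⧸ Λ.comap D.subtype) :=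
    (LinearMap.ker g).liftQ g le_rfl
  have hgbarinj : Function.Injective gbar := by
    rw [← LinearMap.ker_eq_bot]
    exact Submodule.ker_liftQ_eq_bot _ _ _ le_rfl
  let p : (↥M ⧸ LinearMap.ker g) →ₗ[O] (↥N₂ ⧸ K) := (LinearMap.ker g).liftQ π hkerle
  have hpsurj : Function.Surjective p := by
    intro qb
    obtain ⟨m, hm⟩ := hπsurj qb
    exact ⟨(LinearMap.ker g).mkQ m, by
      show ((LinearMap.ker g).liftQ π hkerle) ((LinearMap.ker g).mkQ m) = qb
      rw [Submodule.mkQ_apply, Submodule.liftQ_apply, hm]⟩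
  -- torsion structures
  have hSt : Module.IsTorsionBy O (↥M ⧸ LinearMap.ker g) ϖ := by
    intro s
    obtain ⟨m, rfl⟩ := Submodule.Quotient.mk_surjective _ s
    rw [← Submodule.Quotient.mk_smul, Submodule.Quotient.mk_eq_zero, LinearMap.mem_ker,
      hkerg]
    have hmD : (m : V) ∈ D := (Submodule.mem_inf.mp m.2).1
    exact hvert _ hmD
  have hQt : Module.IsTorsionBy O (↥N₂ ⧸ K) ϖ := by
    intro s
    obtain ⟨y, rfl⟩ := hpsurj s
    rw [← map_smul]
    have h0 : ϖ • y = 0 := @hSt y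
    rw [h0, map_zero]
  have hSt2 : Module.IsTorsionBySet O (↥M ⧸ LinearMap.ker g)
      ((Ideal.span {ϖ} : Ideal O) : Set O) :=
    (Module.isTorsionBySet_span_singleton_iff ϖ).mpr hSt
  have hQt2 : Module.IsTorsionBySet O (↥N₂ ⧸ K) ((Ideal.span {ϖ} : Ideal O) : Set O) :=
    (Module.isTorsionBySet_span_singleton_iff ϖ).mpr hQt
  letI : Module (O ⧸ Ideal.span {ϖ}) (↥M ⧸ LinearMap.ker g) := hSt2.module
  letI : Module (O ⧸ Ideal.span {ϖ}) (↥N₂ ⧸ K) := hQt2.module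
  -- upgrade p to a linear map over the residue field
  let pk : (↥M ⧸ LinearMap.ker g) →ₗ[O ⧸ Ideal.span {ϖ}] (↥N₂ ⧸ K) :=
    { toFun := p
      map_add' := p.map_add
      map_smul' := by
        intro κ x
        obtain ⟨cκ, rfl⟩ := Ideal.Quotient.mk_surjective κ
        simp only [RingHom.id_apply]
        have h1 : (Ideal.Quotient.mk (Ideal.span {ϖ}) cκ) • x = cκ • x :=
          hSt2.mk_smul cκ x
        have h2 : (Ideal.Quotient.mk (Ideal.span {ϖ}) cκ) • p x = cκ • p x :=
          hQt2.mk_smul cκ (p x)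
        rw [h1, h2, map_smul] }
  have hpksurj : LinearMap.range pk = ⊤ := by
    rw [LinearMap.range_eq_top]
    exact hpsurj
  haveI : Module.Projective (O ⧸ Ideal.span {ϖ}) (↥N₂ ⧸ K) := inferInstance
  obtain ⟨sec, hsec⟩ := pk.exists_rightInverse_of_surjective hpksurj
  have hsecinj : Function.Injective sec := by
    intro u v huv
    have h1 : pk (sec u) = u := by
      have := congrArg (fun m => m u) hsec
      simpa using this
    have h2 : pk (sec v) = v := by
      have := congrArg (fun m => m v) hsec
      simpa using this
    rw [← h1, ← h2, huv]
  -- assemble: f = gbar ∘ sec, made O-linear by hand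
  refine ⟨{ toFun := fun x0 => gbar (sec x0)
            map_add' := by
              intro a b
              show gbar (sec (a + b)) = gbar (sec a) + gbar (sec b)
              rw [map_add, map_add]
            map_smul' := by
              intro o x0
              simp only [RingHom.id_apply]
              show gbar (sec (o • x0)) = o • gbar (sec x0)
              have h1 : (o • x0 : ↥N₂ ⧸ K)
                  = (Ideal.Quotient.mk (Ideal.span {ϖ}) o) • x0 :=
                (hQt2.mk_smul o x0).symm
              have h2 : (Ideal.Quotient.mk (Ideal.span {ϖ}) o) • sec x0
                  = o • sec x0 := hSt2.mk_smul o (sec x0)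
              rw [h1, map_smul, h2, map_smul] }, ?_⟩
  intro u v huv
  exact hsecinj (hgbarinj huv)

end
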